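/- (Proof by cases on prelinearity.) Let α and β be sentences and φ a formula. If Γ ∪ {α → β} ⊢ φ and Γ ∪ {β → α} ⊢ φ, then Γ ⊢ φ. -/
import Mathlib


/-! ## Syntax of a countable predicate language and the logic `⊢` -/

/-- A countable predicate language: countably many constant symbols and
predicate symbols with arities. (Variables are indexed by `ℕ`.) -/
structure PredLanguage where
  Const : Type
  Pred : Type
  arity : Pred → ℕ
  const_countable : Countable Const
  pred_countable : Countable Pred

variable {L : PredLanguage}

/-- Terms: variables (indexed by `ℕ`) and constants. -/
inductive Term (L : PredLanguage) : Type
  | var : ℕ → Term L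
  | const : L.Const → Term L

/-- `t.usesVar x` : the variable `x` occurs in the term `t`. -/
def Term.usesVar (x : ℕ) : Term L → Prop
  | .var y => y = x
  | .const _ => False

/-- `t.usesConst c` : the constant `c` occurs in the term `t`. -/
def Term.usesConst (c : L.Const) : Term L → Prop
  | .var _ => False
  | .const d => d = c

/-- Substitution of the term `t` for the variable `x` in a term. -/
noncomputable def Term.substVar (x : ℕ) (t : Term L) : Term L → Term L
  | .var y => if y = x then t else .var y
  | .const d => .const d

open Classical in
/-- Replacing every occurrence of the constant `c` by the variable `x` in a term. -/
noncomputable def Term.substConst (c : L.Const) (x : ℕ) : Term L → Term L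
  | .var y => .var y
  | .const d => if d = c then .var x else .const d

/-- Formulas of the predicate language `L`: the propositional constant `0̄`, atomic
predicate formulas, the connectives `→` and `&`, and the quantifiers `∀` and `∃`. -/
inductive Formula (L : PredLanguage) : Type
  | bot : Formula L
  | pred : (P : L.Pred) → (Fin (L.arity P) → Term L) → Formula L
  | imp : Formula L → Formula L → Formula L
  | conj : Formula L → Formula L → Formula L
  | all : ℕ → Formula L → Formula L
  | ex : ℕ → Formula L → Formula L

namespace Formula

/-- `1̄ := 0̄ → 0̄`. -/
def one : Formula L := .imp .bot .bot

/-- `φ ∧ ψ := φ & (φ → ψ)`. -/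
def and (φ ψ : Formula L) : Formula L := .conj φ (.imp φ ψ)

/-- `φ ∨ ψ := ((φ→ψ)→ψ) ∧ ((ψ→φ)→φ)`. -/
def or (φ ψ : Formula L) : Formula L := and (.imp (.imp φ ψ) ψ) (.imp (.imp ψ φ) φ)

/-- `φⁿ`, the `n`-fold `&`-power of `φ`, with `φ⁰ = 1̄`. -/
def pow (φ : Formula L) : ℕ → Formula L
  | 0 => one
  | n + 1 => .conj φ (φ.pow n)

/-- `φ.freeIn x` : the variable `x` occurs free in `φ`. -/
def freeIn (x : ℕ) : Formula L → Prop
  | .bot => False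
  | .pred _ ts => ∃ i, (ts i).usesVar x
  | .imp φ ψ => φ.freeIn x ∨ ψ.freeIn x
  | .conj φ ψ => φ.freeIn x ∨ ψ.freeIn x
  | .all y φ => y ≠ x ∧ φ.freeIn x
  | .ex y φ => y ≠ x ∧ φ.freeIn x

/-- `φ.usesConst c` : the constant `c` occurs in `φ`. -/
def usesConst (c : L.Const) : Formula L → Prop
  | .bot => False
  | .pred _ ts => ∃ i, (ts i).usesConst c
  | .imp φ ψ => φ.usesConst c ∨ ψ.usesConst c
  | .conj φ ψ => φ.usesConst c ∨ ψ.usesConst c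
  | .all _ φ => φ.usesConst c
  | .ex _ φ => φ.usesConst c

/-- A sentence is a formula with no free variables. -/
def IsSentence (φ : Formula L) : Prop := ∀ x, ¬ φ.freeIn x

/-- `φ.substVar x t` : the result of substituting `t` for the free occurrences of `x` in `φ`. -/
noncomputable def substVar (x : ℕ) (t : Term L) : Formula L → Formula L
  | .bot => .bot
  | .pred P ts => .pred P fun i => (ts i).substVar x t
  | .imp φ ψ => .imp (φ.substVar x t) (ψ.substVar x t)
  | .conj φ ψ => .conj (φ.substVar x t) (ψ.substVar x t)
  | .all y φ => if y = x then .all y φ else .all y (φ.substVar x t)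
  | .ex y φ => if y = x then .ex y φ else .ex y (φ.substVar x t)

/-- `φ.substConst c x` : the result of replacing every occurrence of the constant `c`
by the variable `x` in `φ`. -/
noncomputable def substConst (c : L.Const) (x : ℕ) : Formula L → Formula L
  | .bot => .bot
  | .pred P ts => .pred P fun i => (ts i).substConst c x
  | .imp φ ψ => .imp (φ.substConst c x) (ψ.substConst c x)
  | .conj φ ψ => .conj (φ.substConst c x) (ψ.substConst c x)
  | .all y φ => .all y (φ.substConst c x)
  | .ex y φ => .ex y (φ.substConst c x)

/-- `Substitutable x t φ` : the term `t` is substitutable for the variable `x` in `φ`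
(no free occurrence of `x` lies in the scope of a quantifier binding a variable of `t`). -/
def Substitutable (x : ℕ) (t : Term L) : Formula L → Prop
  | .bot => True
  | .pred _ _ => True
  | .imp φ ψ => Substitutable x t φ ∧ Substitutable x t ψ
  | .conj φ ψ => Substitutable x t φ ∧ Substitutable x t ψ
  | .all y φ => ¬ (Formula.all y φ).freeIn x ∨ (¬ t.usesVar y ∧ Substitutable x t φ)
  | .ex y φ => ¬ (Formula.ex y φ).freeIn x ∨ (¬ t.usesVar y ∧ Substitutable x t φ)

end Formula

/-- The axiom schemata of the logic: Hájek's (A1)–(A8), the first-order schemata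
(∀1), (∃1), (∀2), (∃2), (Lin), and the schema (RC). -/
inductive IsAxiom : Formula L → Prop
  | a1 (φ ψ χ : Formula L) : IsAxiom (.imp (.imp φ ψ) (.imp (.imp ψ χ) (.imp φ χ)))
  | a2 (φ ψ : Formula L) : IsAxiom (.imp (.conj φ ψ) φ)
  | a3 (φ ψ : Formula L) : IsAxiom (.imp (.conj φ ψ) (.conj ψ φ))
  | a4 (φ ψ : Formula L) : IsAxiom (.imp (.conj φ (.imp φ ψ)) (.conj ψ (.imp ψ φ)))
  | a5 (φ ψ χ : Formula L) : IsAxiom (.imp (.imp φ (.imp ψ χ)) (.imp (.conj φ ψ) χ))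
  | a6 (φ ψ χ : Formula L) : IsAxiom (.imp (.imp (.conj φ ψ) χ) (.imp φ (.imp ψ χ)))
  | a7 (φ ψ χ : Formula L) :
      IsAxiom (.imp (.imp (.imp φ ψ) χ) (.imp (.imp (.imp ψ φ) χ) χ))
  | a8 (φ : Formula L) : IsAxiom (.imp .bot φ)
  | all1 (φ : Formula L) (x : ℕ) (t : Term L) (h : Formula.Substitutable x t φ) :
      IsAxiom (.imp (.all x φ) (φ.substVar x t))
  | ex1 (φ : Formula L) (x : ℕ) (t : Term L) (h : Formula.Substitutable x t φ) :
      IsAxiom (.imp (φ.substVar x t) (.ex x φ))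
  | all2 (φ ψ : Formula L) (x : ℕ) (h : ¬ φ.freeIn x) :
      IsAxiom (.imp (.all x (.imp φ ψ)) (.imp φ (.all x ψ)))
  | ex2 (φ ψ : Formula L) (x : ℕ) (h : ¬ φ.freeIn x) :
      IsAxiom (.imp (.all x (.imp ψ φ)) (.imp (.ex x ψ) φ))
  | lin (φ ψ : Formula L) (x : ℕ) (h : ¬ φ.freeIn x) :
      IsAxiom (.imp (.all x (ψ.or φ)) ((Formula.all x ψ).or φ))
  | rc (χ : Formula L) (x : ℕ) :
      IsAxiom (.imp (.all x (.conj χ χ)) (.conj (.all x χ) (.all x χ)))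

/-- `Deriv Γ φ` (written `Γ ⊢ φ`): `φ` has a (possibly infinite, well-founded,
i.e. ordinal-indexed) proof from `Γ` using the axioms, Modus Ponens, Generalization,
and the infinitary rule (Inf) for sentences `φ, α, β`. -/
inductive Deriv (Γ : Set (Formula L)) : Formula L → Prop
  | ax {φ : Formula L} : IsAxiom φ → Deriv Γ φ
  | hyp {φ : Formula L} : φ ∈ Γ → Deriv Γ φ
  | mp {φ ψ : Formula L} : Deriv Γ φ → Deriv Γ (.imp φ ψ) → Deriv Γ ψ
  | gen {φ : Formula L} {x : ℕ} : Deriv Γ φ → Deriv Γ (.all x φ)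
  | inf {φ α β : Formula L} : φ.IsSentence → α.IsSentence → β.IsSentence →
      (∀ n : ℕ, Deriv Γ (φ.or (.imp α (β.pow n)))) →
      Deriv Γ (φ.or (.imp α (.conj α β)))

namespace PL7
open Formula

variable {L : PredLanguage} {Γ : Set (Formula L)} {a b c p q r τ σ χ ψ : Formula L}

theorem dtrans (h1 : Deriv Γ (imp a b)) (h2 : Deriv Γ (imp b c)) : Deriv Γ (imp a c) :=
  h2.mp (h1.mp (Deriv.ax (IsAxiom.a1 a b c)))

theorem dK : Deriv Γ (imp a (imp b a)) :=
  (Deriv.ax (IsAxiom.a2 a b)).mp (Deriv.ax (IsAxiom.a6 a b a))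

theorem dMpand : Deriv Γ (imp (conj a (imp a b)) b) :=
  dtrans (Deriv.ax (IsAxiom.a4 a b)) (Deriv.ax (IsAxiom.a2 b (imp b a)))

theorem dAssert : Deriv Γ (imp a (imp (imp a b) b)) :=
  dMpand.mp (Deriv.ax (IsAxiom.a6 a (imp a b) b))

theorem dOne : Deriv Γ (Formula.one (L := L)) := Deriv.ax (IsAxiom.a8 Formula.bot)

theorem dId : Deriv Γ (imp a a) :=
  dtrans (dK (b := Formula.one)) (dOne.mp (dAssert (a := Formula.one) (b := a)))

theorem dSwap : Deriv Γ (imp (imp a (imp b c)) (imp b (imp a c))) :=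
  dtrans (Deriv.ax (IsAxiom.a5 a b c))
    (dtrans ((Deriv.ax (IsAxiom.a3 b a)).mp (Deriv.ax (IsAxiom.a1 (conj b a) (conj a b) c)))
      (Deriv.ax (IsAxiom.a6 b a c)))

theorem swapRule (h : Deriv Γ (imp a (imp b c))) : Deriv Γ (imp b (imp a c)) := h.mp dSwap

theorem prefixRule (h : Deriv Γ (imp b c)) : Deriv Γ (imp (imp a b) (imp a c)) :=
  h.mp (swapRule (Deriv.ax (IsAxiom.a1 a b c)))

theorem dAndSelf : Deriv Γ (imp (imp a b) (imp a (conj a (imp a b)))) :=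
  (Deriv.ax (IsAxiom.a3 (imp a b) a)).mp (Deriv.ax (IsAxiom.a6 (imp a b) a (conj a (imp a b))))

theorem andIntroRule (hy : Deriv Γ (imp a b)) (hz : Deriv Γ (imp a c)) :
    Deriv Γ (imp a (Formula.and b c)) := by
  unfold Formula.and
  have br1 : Deriv Γ (imp (imp b c) (imp a (conj b (imp b c)))) :=
    dtrans dAndSelf (hy.mp (Deriv.ax (IsAxiom.a1 a b (conj b (imp b c)))))
  have br2 : Deriv Γ (imp (imp c b) (imp a (conj b (imp b c)))) :=
    dtrans (dtrans dAndSelf (hz.mp (Deriv.ax (IsAxiom.a1 a c (conj c (imp c b))))))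
      (prefixRule (Deriv.ax (IsAxiom.a4 c b)))
  exact br2.mp (br1.mp (Deriv.ax (IsAxiom.a7 b c (imp a (conj b (imp b c))))))

theorem orIntroL : Deriv Γ (imp p (Formula.or p q)) := by
  unfold Formula.or; exact andIntroRule dAssert dK

theorem orIntroR : Deriv Γ (imp q (Formula.or p q)) := by
  unfold Formula.or; exact andIntroRule dK dAssert

theorem orElimRule (hp : Deriv Γ (imp p r)) (hq : Deriv Γ (imp q r)) :
    Deriv Γ (imp (Formula.or p q) r) := by
  have dDA : Deriv Γ (imp (Formula.or p q) (imp (imp p q) q)) :=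
    Deriv.ax (IsAxiom.a2 _ _)
  have dDB : Deriv Γ (imp (Formula.or p q) (imp (imp q p) p)) := dMpand
  have branch1 : Deriv Γ (imp (imp p q) (imp (Formula.or p q) r)) :=
    dtrans dAssert (dtrans (dDA.mp (Deriv.ax (IsAxiom.a1 _ _ q))) (prefixRule hq))
  have branch2 : Deriv Γ (imp (imp q p) (imp (Formula.or p q) r)) :=
    dtrans dAssert (dtrans (dDB.mp (Deriv.ax (IsAxiom.a1 _ _ p))) (prefixRule hp))
  exact branch2.mp (branch1.mp (Deriv.ax (IsAxiom.a7 p q (imp (Formula.or p q) r))))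

theorem dOrComm : Deriv Γ (imp (Formula.or p q) (Formula.or q p)) :=
  orElimRule orIntroR orIntroL

theorem orMPRule (h1 : Deriv Γ (Formula.or c a)) (h2 : Deriv Γ (Formula.or c (imp a b))) :
    Deriv Γ (Formula.or c b) := by
  have s1 : Deriv Γ (imp c (imp (Formula.or c (imp a b)) (Formula.or c b))) :=
    dtrans orIntroL dK
  have s2 : Deriv Γ (imp (Formula.or c (imp a b)) (imp a (Formula.or c b))) :=
    orElimRule (dtrans orIntroL dK) (prefixRule orIntroR)
  have s3 : Deriv Γ (imp (Formula.or c a) (imp (Formula.or c (imp a b)) (Formula.or c b))) :=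
    orElimRule s1 (swapRule s2)
  exact h2.mp (h1.mp s3)

theorem dPrelin : Deriv Γ (Formula.or (imp a b) (imp b a)) :=
  orIntroR.mp (orIntroL.mp (Deriv.ax (IsAxiom.a7 a b (Formula.or (imp a b) (imp b a)))))

theorem orAssoc1 : Deriv Γ (imp (Formula.or (Formula.or p q) r) (Formula.or p (Formula.or q r))) :=
  orElimRule (orElimRule orIntroL (dtrans orIntroL orIntroR)) (dtrans orIntroR orIntroR)

theorem orAssoc2 : Deriv Γ (imp (Formula.or p (Formula.or q r)) (Formula.or (Formula.or p q) r)) :=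
  orElimRule (dtrans orIntroL orIntroL) (orElimRule (dtrans orIntroR orIntroL) orIntroR)

theorem dOrIdem : Deriv Γ (imp (Formula.or p p) p) := orElimRule dId dId

theorem sent_imp (ha : a.IsSentence) (hb : b.IsSentence) : (imp a b).IsSentence :=
  fun x hx => (hx : a.freeIn x ∨ b.freeIn x).elim (ha x) (hb x)

theorem sent_conj (ha : a.IsSentence) (hb : b.IsSentence) : (conj a b).IsSentence :=
  fun x hx => (hx : a.freeIn x ∨ b.freeIn x).elim (ha x) (hb x)

theorem sent_or (ha : a.IsSentence) (hb : b.IsSentence) : (Formula.or a b).IsSentence := by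
  unfold Formula.or Formula.and
  exact sent_conj (sent_imp (sent_imp ha hb) hb)
    (sent_imp (sent_imp (sent_imp ha hb) hb) (sent_imp (sent_imp hb ha) ha))

theorem cut (hχ : Deriv Γ χ) (h : Deriv (Γ ∪ {χ}) ψ) : Deriv Γ ψ := by
  induction h with
  | ax h => exact .ax h
  | hyp h =>
      rcases h with h | h
      · exact .hyp h
      · have : _ = χ := h
        exact this ▸ hχ
  | mp _ _ ih1 ih2 => exact ih1.mp ih2
  | gen _ ih => exact ih.gen
  | inf hs ha hb _ ih => exact .inf hs ha hb ih

theorem lift (hτ : τ.IsSentence) (h : Deriv (Γ ∪ {σ}) ψ) :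
    Deriv (Γ ∪ {Formula.or τ σ}) (Formula.or τ ψ) := by
  induction h with
  | ax hφ => exact (Deriv.ax hφ).mp orIntroR
  | hyp hφ =>
      rcases hφ with hφ | hφ
      · exact (Deriv.hyp (Or.inl hφ)).mp orIntroR
      · have hφ' : _ = σ := hφ
        subst hφ'
        exact Deriv.hyp (Or.inr rfl)
  | mp _ _ ih1 ih2 => exact orMPRule ih1 ih2
  | @gen φ x _ ih =>
      have h1 := (ih.mp dOrComm).gen (x := x)
      have h2 := h1.mp (Deriv.ax (IsAxiom.lin τ φ x (hτ x)))
      exact h2.mp dOrComm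
  | @inf φ' α' β' hs ha hb _ ih =>
      have step : ∀ n, Deriv (Γ ∪ {Formula.or τ σ})
          (Formula.or (Formula.or τ φ') (imp α' (pow β' n))) := fun n => (ih n).mp orAssoc2
      exact (Deriv.inf (sent_or hτ hs) ha hb step).mp orAssoc1

/-! ### Universal closure machinery -/

def Term.varList : Term L → List ℕ
  | .var y => [y]
  | .const _ => []

def freeList : Formula L → List ℕ
  | .bot => []
  | .pred P ts => (List.finRange (L.arity P)).flatMap fun i => Term.varList (ts i)
  | .imp a b => freeList a ++ freeList b
  | .conj a b => freeList a ++ freeList b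
  | .all _ a => freeList a
  | .ex _ a => freeList a

theorem mem_varList {x : ℕ} {t : Term L} (h : t.usesVar x) : x ∈ Term.varList t := by
  cases t with
  | var y =>
      have : y = x := h
      simp [Term.varList, this]
  | const c => exact absurd h (by simp [Term.usesVar])

theorem mem_freeList {x : ℕ} : ∀ {φ : Formula L}, φ.freeIn x → x ∈ freeList φ
  | .bot, h => absurd h (by simp [freeIn])
  | .pred P ts, h => by
      obtain ⟨i, hi⟩ := (h : ∃ i, (ts i).usesVar x)
      simp only [freeList, List.mem_flatMap]
      exact ⟨i, List.mem_finRange i, mem_varList hi⟩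
  | .imp a b, h => by
      rcases (h : a.freeIn x ∨ b.freeIn x) with h | h
      · exact List.mem_append.mpr (Or.inl (mem_freeList h))
      · exact List.mem_append.mpr (Or.inr (mem_freeList h))
  | .conj a b, h => by
      rcases (h : a.freeIn x ∨ b.freeIn x) with h | h
      · exact List.mem_append.mpr (Or.inl (mem_freeList h))
      · exact List.mem_append.mpr (Or.inr (mem_freeList h))
  | .all y a, h => show x ∈ freeList a from mem_freeList (h : y ≠ x ∧ a.freeIn x).2
  | .ex y a, h => show x ∈ freeList a from mem_freeList (h : y ≠ x ∧ a.freeIn x).2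

def close (l : List ℕ) (φ : Formula L) : Formula L := l.foldr Formula.all φ

theorem freeIn_close {x : ℕ} {φ : Formula L} :
    ∀ l : List ℕ, (close l φ).freeIn x → φ.freeIn x ∧ x ∉ l
  | [], h => ⟨h, by simp⟩
  | y :: l, h => by
      have h' : y ≠ x ∧ (close l φ).freeIn x := h
      have h2 := freeIn_close l h'.2
      refine ⟨h2.1, fun hm => ?_⟩
      rcases List.mem_cons.mp hm with rfl | hm
      · exact h'.1 rfl
      · exact h2.2 hm

theorem close_sentence {φ : Formula L} {l : List ℕ}
    (hl : ∀ x, φ.freeIn x → x ∈ l) : (close l φ).IsSentence := by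
  intro x hx
  have := freeIn_close l hx
  exact this.2 (hl x this.1)

theorem deriv_close {φ : Formula L} : ∀ l : List ℕ, Deriv Γ φ → Deriv Γ (close l φ)
  | [], h => h
  | y :: l, h => (deriv_close l h).gen

theorem tsubst_self {x : ℕ} (s : Term L) : Term.substVar x s (Term.var x) = s := by
  simp [Term.substVar]

theorem subst_self {x : ℕ} : ∀ φ : Formula L, φ.substVar x (Term.var x) = φ
  | .bot => rfl
  | .pred P ts => by
      simp only [Formula.substVar]
      exact congrArg _ (funext fun i => tsubst_self (ts i))
  | .imp a b => by simp only [Formula.substVar]; rw [subst_self a, subst_self b]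
  | .conj a b => by simp only [Formula.substVar]; rw [subst_self a, subst_self b]
  | .all y a => by
      simp only [Formula.substVar]
      split
      · rfl
      · rw [subst_self a]
  | .ex y a => by
      simp only [Formula.substVar]
      split
      · rfl
      · rw [subst_self a]

theorem substitutable_self {x : ℕ} : ∀ φ : Formula L, Substitutable x (Term.var x) φ
  | .bot => trivial
  | .pred P ts => trivial
  | .imp a b => ⟨substitutable_self a, substitutable_self b⟩
  | .conj a b => ⟨substitutable_self a, substitutable_self b⟩
  | .all y a => by
      by_cases h : y = x
      · exact Or.inl fun hf => (hf : y ≠ x ∧ a.freeIn x).1 h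
      · exact Or.inr ⟨fun hv => h ((hv : x = y)).symm, substitutable_self a⟩
  | .ex y a => by
      by_cases h : y = x
      · exact Or.inl fun hf => (hf : y ≠ x ∧ a.freeIn x).1 h
      · exact Or.inr ⟨fun hv => h ((hv : x = y)).symm, substitutable_self a⟩

theorem close_deriv {φ : Formula L} : ∀ l : List ℕ, Deriv Γ (close l φ) → Deriv Γ φ
  | [], h => h
  | y :: l, h => by
      have hax : Deriv Γ (imp (Formula.all y (close l φ))
          ((close l φ).substVar y (Term.var y))) :=
        Deriv.ax (IsAxiom.all1 (close l φ) y (Term.var y) (substitutable_self _))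
      rw [subst_self] at hax
      exact close_deriv l (h.mp hax)

end PL7


/-- proof by cases on prelinearity: if `α` and `β` are sentences,
`Γ ∪ {α → β} ⊢ φ` and `Γ ∪ {β → α} ⊢ φ`, then `Γ ⊢ φ`. -/
theorem prelinearity_cases (L : PredLanguage) (Γ : Set (Formula L)) (α β φ : Formula L)
    (hα : α.IsSentence) (hβ : β.IsSentence)
    (h1 : Deriv (Γ ∪ {Formula.imp α β}) φ) (h2 : Deriv (Γ ∪ {Formula.imp β α}) φ) :
    Deriv Γ φ := by
  classical
  have hδ : (Formula.imp α β).IsSentence := PL7.sent_imp hα hβ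
  have hδ' : (Formula.imp β α).IsSentence := PL7.sent_imp hβ hα
  set l := PL7.freeList φ with hl
  have hφc : (PL7.close l φ).IsSentence :=
    PL7.close_sentence (fun x hx => PL7.mem_freeList hx)
  have h1' : Deriv (Γ ∪ {Formula.imp α β}) (PL7.close l φ) := PL7.deriv_close l h1
  have h2' : Deriv (Γ ∪ {Formula.imp β α}) (PL7.close l φ) := PL7.deriv_close l h2
  -- lift h1' along δ' = β→α
  have step1 := PL7.lift (τ := Formula.imp β α) hδ' h1'
  have step2 : Deriv Γ (Formula.or (Formula.imp β α) (PL7.close l φ)) :=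
    PL7.cut PL7.dPrelin step1
  have step3 : Deriv Γ (Formula.or (PL7.close l φ) (Formula.imp β α)) :=
    step2.mp PL7.dOrComm
  have step4 := PL7.lift (τ := PL7.close l φ) hφc h2'
  have step5 : Deriv Γ (Formula.or (PL7.close l φ) (PL7.close l φ)) :=
    PL7.cut step3 step4
  have step6 : Deriv Γ (PL7.close l φ) := step5.mp PL7.dOrIdem
  exact PL7.close_deriv l step6
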